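/- Let G be a simple graph on a finite vertex set and let i be a vertex of G that is not isolated (i.e., i has at least one neighbor in G). Then (G,i) allows the nullity pair (0,1) with the SNIP. -/

import Mathlib

open Matrix

/-- The nullity of a square real matrix: the dimension of its kernel. -/
noncomputable def nullity {V : Type*} [Fintype V] (A : Matrix V V ℝ) : ℕ :=
  Module.finrank ℝ (LinearMap.ker A.mulVecLin)

/-- The principal submatrix of `A` obtained by deleting row and column `i`. -/
def deleteRC {V : Type*} (A : Matrix V V ℝ) (i : V) :
    Matrix {v : V // v ≠ i} {v : V // v ≠ i} ℝ :=
  A.submatrix (fun v => (v : V)) (fun v => (v : V))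

/-- `A` has the `i`-strong nullity interlacing property. -/
def HasSNIP {V : Type*} [Fintype V] [DecidableEq V] (A : Matrix V V ℝ) (i : V) : Prop :=
  ∀ X : Matrix V V ℝ, X.IsSymm → A.hadamard X = 0 →
    (1 : Matrix V V ℝ).hadamard X = 0 →
    (∀ r, r ≠ i → ∀ c, (A * X) r c = 0) → X = 0

/-- `A` has the strong Arnold property. -/
def HasSAP {V : Type*} [Fintype V] [DecidableEq V] (A : Matrix V V ℝ) : Prop :=
  ∀ X : Matrix V V ℝ, X.IsSymm → A.hadamard X = 0 →
    (1 : Matrix V V ℝ).hadamard X = 0 → A * X = 0 → X = 0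

/-- `A` belongs to `𝒮(G)`. -/
def InSG {V : Type*} (G : SimpleGraph V) (A : Matrix V V ℝ) : Prop :=
  A.IsSymm ∧ ∀ u v : V, u ≠ v → (A u v ≠ 0 ↔ G.Adj u v)

/-- `(G,i)` allows the nullity pair `(k,l)`. -/
def Allows {V : Type*} [Fintype V] [DecidableEq V] (G : SimpleGraph V) (i : V)
    (k l : ℕ) : Prop :=
  ∃ A : Matrix V V ℝ, InSG G A ∧ nullity A = k ∧ nullity (deleteRC A i) = l

/-- `(G,i)` allows the nullity pair `(k,l)` with the SNIP. -/
def AllowsSNIP {V : Type*} [Fintype V] [DecidableEq V] (G : SimpleGraph V) (i : V)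
    (k l : ℕ) : Prop :=
  ∃ A : Matrix V V ℝ, InSG G A ∧ nullity A = k ∧ nullity (deleteRC A i) = l ∧ HasSNIP A i


set_option linter.unusedSectionVars false in
section

namespace Stmt10Aux

variable {V : Type*} [Fintype V] [DecidableEq V]

lemma sum_split (g : V → ℝ) (i : V) :
    ∑ v, g v = g i + ∑ v : {v : V // v ≠ i}, g ↑v := by
  rw [← Finset.add_sum_erase _ g (Finset.mem_univ i)]
  congr 1
  exact Finset.sum_subtype (p := fun v => v ≠ i) (Finset.univ.erase i) (fun v => by simp) g

/-- The induced graph on the complement of `i`. -/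
def Gd (G : SimpleGraph V) (i : V) : SimpleGraph {v : V // v ≠ i} :=
  G.comap Subtype.val

instance (G : SimpleGraph V) [DecidableRel G.Adj] (i : V) : DecidableRel (Gd G i).Adj :=
  fun u v => ‹DecidableRel G.Adj› _ _

variable (G : SimpleGraph V) [DecidableRel G.Adj] (i : V) (j' : {v : V // v ≠ i})

open Classical in
/-- Indicator of the component of `j'`. -/
noncomputable def zvec : {v : V // v ≠ i} → ℝ :=
  fun v => if (Gd G i).Reachable j' v then 1 else 0

open Classical in
noncomputable def fdiag : {v : V // v ≠ i} → ℝ :=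
  fun v => if (Gd G i).Reachable j' v then 0 else 1

noncomputable def B : Matrix {v : V // v ≠ i} {v : V // v ≠ i} ℝ :=
  (Gd G i).lapMatrix ℝ + Matrix.diagonal (fdiag G i j')

lemma zvec_apply_reach {v} (hv : (Gd G i).Reachable j' v) : zvec G i j' v = 1 := if_pos hv
lemma zvec_apply_not {v} (hv : ¬ (Gd G i).Reachable j' v) : zvec G i j' v = 0 := if_neg hv

lemma B_isSymm : (B G i j').IsSymm :=
  ((Gd G i).isSymm_lapMatrix (R := ℝ)).add (Matrix.isSymm_diagonal _)

lemma B_mulVec_z : B G i j' *ᵥ zvec G i j' = 0 := by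
  have hL : (Gd G i).lapMatrix ℝ *ᵥ zvec G i j' = 0 := by
    rw [← Matrix.toLin'_apply]
    rw [Matrix.toLin'_apply, (Gd G i).lapMatrix_mulVec_eq_zero_iff_forall_reachable]
    intro u v huv
    unfold zvec
    by_cases hu : (Gd G i).Reachable j' u
    · rw [if_pos hu, if_pos (hu.trans huv)]
    · rw [if_neg hu, if_neg (fun hv => hu (hv.trans huv.symm))]
  ext v
  rw [B, Matrix.add_mulVec, hL]
  simp only [Pi.add_apply, Pi.zero_apply, zero_add, Matrix.mulVec_diagonal]
  unfold fdiag zvec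
  by_cases hv : (Gd G i).Reachable j' v
  · rw [if_pos hv]; ring
  · rw [if_neg hv]; simp [if_neg hv]

lemma B_kernel (x : {v : V // v ≠ i} → ℝ) (hx : B G i j' *ᵥ x = 0) :
    x = x j' • zvec G i j' := by
  have h0 : x ⬝ᵥ (B G i j' *ᵥ x) = 0 := by rw [hx, dotProduct_zero]
  rw [B, Matrix.add_mulVec, dotProduct_add] at h0
  have hterm : ∀ v, x v * (Matrix.diagonal (fdiag G i j') *ᵥ x) v
      = fdiag G i j' v * (x v * x v) := by
    intro v; rw [Matrix.mulVec_diagonal]; ring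
  have hnonneg2 : ∀ v ∈ Finset.univ,
      (0:ℝ) ≤ x v * (Matrix.diagonal (fdiag G i j') *ᵥ x) v := by
    intro v _
    rw [hterm v]
    apply mul_nonneg
    · unfold fdiag; split_ifs <;> norm_num
    · exact mul_self_nonneg _
  have hnonneg1 : (0:ℝ) ≤ x ⬝ᵥ ((Gd G i).lapMatrix ℝ *ᵥ x) := by
    have := ((Gd G i).posSemidef_lapMatrix (R := ℝ)).dotProduct_mulVec_nonneg x
    rwa [star_trivial] at this
  have hsum2 : (0:ℝ) ≤ x ⬝ᵥ (Matrix.diagonal (fdiag G i j') *ᵥ x) :=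
    Finset.sum_nonneg hnonneg2
  have hz1 : x ⬝ᵥ ((Gd G i).lapMatrix ℝ *ᵥ x) = 0 := by linarith
  have hz2 : x ⬝ᵥ (Matrix.diagonal (fdiag G i j') *ᵥ x) = 0 := by linarith
  have hreach : ∀ u v, (Gd G i).Reachable u v → x u = x v := by
    rw [← (Gd G i).lapMatrix_toLinearMap₂'_apply'_eq_zero_iff_forall_reachable]
    rw [Matrix.toLinearMap₂'_apply']
    exact hz1
  have hzero : ∀ v, ¬ (Gd G i).Reachable j' v → x v = 0 := by
    intro v hv
    have := (Finset.sum_eq_zero_iff_of_nonneg hnonneg2).1 hz2 v (Finset.mem_univ v)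
    rw [hterm v] at this
    have hf : fdiag G i j' v = 1 := if_neg hv
    rw [hf, one_mul] at this
    exact mul_self_eq_zero.1 this
  funext v
  by_cases hv : (Gd G i).Reachable j' v
  · rw [Pi.smul_apply, zvec_apply_reach G i j' hv, smul_eq_mul, mul_one]
    exact (hreach j' v hv).symm
  · rw [Pi.smul_apply, zvec_apply_not G i j' hv, smul_eq_mul, mul_zero]
    exact hzero v hv

lemma nullity_B : Module.finrank ℝ (LinearMap.ker (B G i j').mulVecLin) = 1 := by
  have hker : LinearMap.ker (B G i j').mulVecLin = Submodule.span ℝ {zvec G i j'} := by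
    ext x
    rw [LinearMap.mem_ker, Submodule.mem_span_singleton]
    constructor
    · intro hx
      exact ⟨x j', (B_kernel G i j' x (by rwa [Matrix.mulVecLin_apply] at hx)).symm⟩
    · rintro ⟨a, rfl⟩
      rw [Matrix.mulVecLin_apply, Matrix.mulVec_smul, B_mulVec_z, smul_zero]
  rw [hker]
  apply finrank_span_singleton
  intro hz
  have : zvec G i j' j' = 1 := zvec_apply_reach G i j' (SimpleGraph.Reachable.refl j')
  rw [hz] at this
  simp at this

end Stmt10Aux

namespace Stmt10Aux

variable {V : Type*} [Fintype V] [DecidableEq V]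
variable (G : SimpleGraph V) [DecidableRel G.Adj] (i : V) (j' : {v : V // v ≠ i})

/-- The full matrix `A`. -/
noncomputable def Amat : Matrix V V ℝ := fun u v =>
  if hu : u = i then (if v = i then 0 else if G.Adj i v then 1 else 0)
  else if hv : v = i then (if G.Adj u i then 1 else 0)
  else B G i j' ⟨u, hu⟩ ⟨v, hv⟩

lemma Amat_apply_ne_ne {u v : V} (hu : u ≠ i) (hv : v ≠ i) :
    Amat G i j' u v = B G i j' ⟨u, hu⟩ ⟨v, hv⟩ := by
  unfold Amat; rw [dif_neg hu, dif_neg hv]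

lemma Amat_apply_i_ne {v : V} (hv : v ≠ i) :
    Amat G i j' i v = if G.Adj i v then 1 else 0 := by
  unfold Amat; rw [dif_pos rfl, if_neg hv]

lemma Amat_apply_ne_i {u : V} (hu : u ≠ i) :
    Amat G i j' u i = if G.Adj u i then 1 else 0 := by
  unfold Amat; rw [dif_neg hu, dif_pos rfl]

lemma Amat_apply_i_i : Amat G i j' i i = 0 := by
  unfold Amat; rw [dif_pos rfl, if_pos rfl]

lemma B_apply_ne {u v : {v : V // v ≠ i}} (huv : u ≠ v) :
    B G i j' u v = - (if G.Adj ↑u ↑v then 1 else 0) := by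
  unfold B
  rw [Matrix.add_apply, Matrix.diagonal_apply_ne _ huv, add_zero]
  rw [SimpleGraph.lapMatrix, Matrix.sub_apply, SimpleGraph.degMatrix,
    Matrix.diagonal_apply_ne _ huv, zero_sub]
  congr 1

lemma deleteRC_Amat : (Amat G i j').submatrix
    (fun v : {v : V // v ≠ i} => (v : V)) (fun v : {v : V // v ≠ i} => (v : V)) = B G i j' := by
  ext u v
  rw [Matrix.submatrix_apply, Amat_apply_ne_ne G i j' u.2 v.2]

lemma Amat_isSymm : (Amat G i j').IsSymm := by
  rw [Matrix.IsSymm]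
  ext u v
  rw [Matrix.transpose_apply]
  by_cases hu : u = i <;> by_cases hv : v = i
  · rw [hu, hv]
  · rw [hu, Amat_apply_ne_i G i j' hv, Amat_apply_i_ne G i j' hv]
    simp [G.adj_comm]
  · rw [hv, Amat_apply_i_ne G i j' hu, Amat_apply_ne_i G i j' hu]
    simp [G.adj_comm]
  · rw [Amat_apply_ne_ne G i j' hv hu, Amat_apply_ne_ne G i j' hu hv]
    have := B_isSymm G i j'
    rw [Matrix.IsSymm] at this
    conv_lhs => rw [← this]
    rfl

lemma Amat_inSG : (Amat G i j').IsSymm ∧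
    ∀ u v : V, u ≠ v → (Amat G i j' u v ≠ 0 ↔ G.Adj u v) := by
  refine ⟨Amat_isSymm G i j', fun u v huv => ?_⟩
  by_cases hu : u = i <;> by_cases hv : v = i
  · exact absurd (hu.trans hv.symm) huv
  · rw [hu, Amat_apply_i_ne G i j' hv]
    split_ifs with h <;> simp [h]
  · rw [hv, Amat_apply_ne_i G i j' hu]
    split_ifs with h <;> simp [h]
  · rw [Amat_apply_ne_ne G i j' hu hv, B_apply_ne G i j' (by simp [Subtype.ext_iff, huv])]
    split_ifs with h <;> simp [h]

noncomputable def avec : {v : V // v ≠ i} → ℝ := fun v => if G.Adj ↑v i then 1 else 0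

lemma avec_nonneg (v : {v : V // v ≠ i}) : 0 ≤ avec G i v := by
  unfold avec; split_ifs <;> norm_num

lemma mulVec_Amat_ne (x : V → ℝ) (v : {v : V // v ≠ i}) :
    (Amat G i j' *ᵥ x) ↑v = avec G i v * x i + (B G i j' *ᵥ (fun u => x ↑u)) v := by
  rw [Matrix.mulVec, dotProduct,
    sum_split (fun u => Amat G i j' ↑v u * x u) i]
  congr 1
  · rw [Amat_apply_ne_i G i j' v.2]; rfl
  · rw [Matrix.mulVec, dotProduct]
    refine Finset.sum_congr rfl fun u _ => ?_
    rw [Amat_apply_ne_ne G i j' v.2 u.2]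

lemma mulVec_Amat_i (x : V → ℝ) :
    (Amat G i j' *ᵥ x) i = ∑ u : {v : V // v ≠ i}, avec G i u * x ↑u := by
  rw [Matrix.mulVec, dotProduct,
    sum_split (fun u => Amat G i j' i u * x u) i, Amat_apply_i_i, zero_mul, zero_add]
  refine Finset.sum_congr rfl fun u _ => ?_
  rw [Amat_apply_i_ne G i j' u.2]
  simp [avec, G.adj_comm]

lemma az_one (hadj : G.Adj i ↑j') :
    (1:ℝ) ≤ ∑ u : {v : V // v ≠ i}, avec G i u * zvec G i j' u := by
  have hterm : avec G i j' * zvec G i j' j' = 1 := by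
    unfold avec
    rw [if_pos ((G.adj_comm i ↑j').1 hadj), zvec_apply_reach G i j' (SimpleGraph.Reachable.refl j'),
      one_mul]
  calc (1:ℝ) = avec G i j' * zvec G i j' j' := hterm.symm
    _ ≤ _ := Finset.single_le_sum (f := fun u => avec G i u * zvec G i j' u)
        (fun u _ => mul_nonneg (avec_nonneg G i u) (by
          unfold zvec; split_ifs <;> norm_num)) (Finset.mem_univ j')

lemma az_ne (hadj : G.Adj i ↑j') :
    (∑ u : {v : V // v ≠ i}, avec G i u * zvec G i j' u) ≠ 0 := by
  have := az_one G i j' hadj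
  linarith

lemma Amat_ker (hadj : G.Adj i ↑j') (x : V → ℝ) (hx : Amat G i j' *ᵥ x = 0) : x = 0 := by
  set y : {v : V // v ≠ i} → ℝ := fun u => x ↑u with hy
  have h1 : ∀ v : {v : V // v ≠ i}, avec G i v * x i + (B G i j' *ᵥ y) v = 0 := by
    intro v
    rw [← mulVec_Amat_ne G i j' x v, hx]
    rfl
  -- dot the equations with z
  have h2 : (∑ v : {v : V // v ≠ i}, zvec G i j' v * (avec G i v * x i))
      + zvec G i j' ⬝ᵥ (B G i j' *ᵥ y) = 0 := by
    rw [dotProduct, ← Finset.sum_add_distrib]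
    apply Finset.sum_eq_zero
    intro v _
    rw [← mul_add, h1 v, mul_zero]
  have h3 : zvec G i j' ⬝ᵥ (B G i j' *ᵥ y) = 0 := by
    rw [Matrix.dotProduct_mulVec, ← Matrix.mulVec_transpose,
      (B_isSymm G i j').eq, B_mulVec_z]
    exact zero_dotProduct y
  have h4 : (∑ v : {v : V // v ≠ i}, avec G i v * zvec G i j' v) * x i = 0 := by
    rw [Finset.sum_mul]
    rw [h3, add_zero] at h2
    rw [← h2]
    refine Finset.sum_congr rfl fun v _ => by ring
  have hxi : x i = 0 := by
    rcases mul_eq_zero.1 h4 with h | h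
    · exact absurd h (az_ne G i j' hadj)
    · exact h
  have hBy : B G i j' *ᵥ y = 0 := by
    funext v
    have := h1 v
    rw [hxi, mul_zero, zero_add] at this
    exact this
  have hyz : y = y j' • zvec G i j' := B_kernel G i j' y hBy
  have hrow_i : (0:ℝ) = y j' * ∑ u : {v : V // v ≠ i}, avec G i u * zvec G i j' u := by
    have h5 : (Amat G i j' *ᵥ x) i = 0 := by rw [hx]; rfl
    rw [mulVec_Amat_i G i j'] at h5
    rw [Finset.mul_sum, ← h5]
    refine Finset.sum_congr rfl fun u _ => ?_
    have : x ↑u = y j' * zvec G i j' u := by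
      have := congrFun hyz u
      simpa [hy] using this
    rw [this]; ring
  have hyj : y j' = 0 := by
    rcases mul_eq_zero.1 hrow_i.symm with h | h
    · exact h
    · exact absurd h (az_ne G i j' hadj)
  funext v
  by_cases hv : v = i
  · rw [hv, hxi]; rfl
  · have := congrFun hyz ⟨v, hv⟩
    rw [hyj, zero_smul] at this
    exact this

lemma nullity_Amat (hadj : G.Adj i ↑j') :
    Module.finrank ℝ (LinearMap.ker (Amat G i j').mulVecLin) = 0 := by
  have : LinearMap.ker (Amat G i j').mulVecLin = ⊥ := by
    rw [LinearMap.ker_eq_bot']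
    intro x hx
    exact Amat_ker G i j' hadj x (by rwa [Matrix.mulVecLin_apply] at hx)
  rw [this, finrank_bot]

lemma Amat_snip (hadj : G.Adj i ↑j') :
    ∀ X : Matrix V V ℝ, X.IsSymm → (Amat G i j').hadamard X = 0 →
      (1 : Matrix V V ℝ).hadamard X = 0 →
      (∀ r, r ≠ i → ∀ c, (Amat G i j' * X) r c = 0) → X = 0 := by
  intro X hXsymm _ hdiag hrows
  have hdiag' : ∀ v, X v v = 0 := by
    intro v
    have := congrFun (congrFun hdiag v) v
    simpa [Matrix.hadamard_apply] using this
  -- A is injective hence surjective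
  have hinj : Function.Injective (Amat G i j').mulVecLin := by
    rw [← LinearMap.ker_eq_bot, LinearMap.ker_eq_bot']
    intro x hx
    exact Amat_ker G i j' hadj x (by rwa [Matrix.mulVecLin_apply] at hx)
  have hsurj : Function.Surjective (Amat G i j').mulVecLin :=
    LinearMap.injective_iff_surjective.1 hinj
  obtain ⟨w, hw⟩ := hsurj (Pi.single i 1)
  rw [Matrix.mulVecLin_apply] at hw
  set m : V → ℝ := fun c => (Amat G i j' * X) i c with hm
  have hcol : ∀ c v, X v c = m c * w v := by
    intro c v
    have hAc : Amat G i j' *ᵥ (fun r => X r c) = m c • (Pi.single i 1 : V → ℝ) := by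
      funext r
      have : (Amat G i j' *ᵥ fun r => X r c) r = (Amat G i j' * X) r c := by
        rw [Matrix.mulVec, dotProduct, Matrix.mul_apply]
      rw [this]
      by_cases hr : r = i
      · rw [hr, Pi.smul_apply, Pi.single_eq_same, smul_eq_mul, mul_one]
      · rw [hrows r hr c, Pi.smul_apply, Pi.single_eq_of_ne hr, smul_eq_mul, mul_zero]
    have hzero : Amat G i j' *ᵥ ((fun r => X r c) - m c • w) = 0 := by
      rw [Matrix.mulVec_sub, hAc, Matrix.mulVec_smul, hw, sub_self]
    have := congrFun (Amat_ker G i j' hadj _ hzero) v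
    simpa [sub_eq_zero] using this
  funext v c
  show X v c = 0
  rw [hcol c v]
  by_cases hmc : m c = 0
  · rw [hmc, zero_mul]
  · have hwc : w c = 0 := by
      have := hdiag' c
      rw [hcol c c] at this
      exact (mul_eq_zero.1 this).resolve_left hmc
    have hsym : X c v = X v c := by
      have := congrFun (congrFun hXsymm.eq c) v
      simpa using this.symm
    have : m v * w c = m c * w v := by rw [← hcol v c, ← hcol c v, hsym]
    rw [hwc, mul_zero] at this
    rw [← this]

end Stmt10Aux

end

/-- if the root `i` is not isolated, `(G,i)` allows `(0,1)` with the SNIP. -/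
theorem stmt10 {V : Type*} [Fintype V] [DecidableEq V] (G : SimpleGraph V) (i : V)
    (h : ∃ j : V, G.Adj i j) : AllowsSNIP G i 0 1 := by
  letI : DecidableRel G.Adj := Classical.decRel _
  obtain ⟨j, hadj⟩ := h
  have hji : j ≠ i := fun e => (G.ne_of_adj hadj) e.symm
  refine ⟨Stmt10Aux.Amat G i ⟨j, hji⟩, Stmt10Aux.Amat_inSG G i ⟨j, hji⟩, ?_, ?_, ?_⟩
  · exact Stmt10Aux.nullity_Amat G i ⟨j, hji⟩ hadj
  · have hd : deleteRC (Stmt10Aux.Amat G i ⟨j, hji⟩) i = Stmt10Aux.B G i ⟨j, hji⟩ :=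
      Stmt10Aux.deleteRC_Amat G i ⟨j, hji⟩
    rw [hd]
    exact Stmt10Aux.nullity_B G i ⟨j, hji⟩
  · exact fun X h1 h2 h3 h4 => Stmt10Aux.Amat_snip G i ⟨j, hji⟩ hadj X h1 h2 h3 h4
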